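/- Let Ω ⊆ ℝ³ be a measurable set of finite Lebesgue measure and 1 < p < 2, with conjugate exponent p' = p/(p−1). Let G_k, G : Ω → ℝ^{3×3} (k ∈ ℕ) be measurable with ∫_Ω|G_k|^p dx < ∞ for all k and ∫_Ω|G|^p dx < ∞, and suppose G_k converges to G weakly in L^p, i.e., ∫_Ω G_k·φ dx → ∫_Ω G·φ dx for every measurable φ : Ω → ℝ^{3×3} with ∫_Ω |φ|^{p'} dx < ∞, where · denotes the Frobenius inner product. Let F_k : Ω → ℝ^{3×3} be measurable with det F_k > 0 almost everywhere on Ω for every k, and let R : Ω → ℝ^{3×3} be measurable with R(x) ∈ SO(3) for almost every x ∈ Ω (i.e., R(x)ᵀR(x) = I₃ and det R(x) = 1), such that ∫_Ω |F_k − R|² dx → 0. Then ∫_Ω |G|² dx ≤ liminf_{k→∞} ∫_Ω |G_k F_k^{−1}|² det F_k dx, where both sides are interpreted as values in [0, ∞]. -/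

import Mathlib

open MeasureTheory Matrix Filter Topology
open scoped ENNReal NNReal

noncomputable section

/-- 2×2 real matrices. -/
abbrev M2 : Type := Matrix (Fin 2) (Fin 2) ℝ
/-- 3×3 real matrices. -/
abbrev M3 : Type := Matrix (Fin 3) (Fin 3) ℝ

/-- squared Frobenius norm of a 2×2 matrix -/
def frobSq2 (A : M2) : ℝ := ∑ i, ∑ j, (A i j) ^ 2

/-- squared Frobenius norm of a 3×3 matrix -/
def frobSq3 (A : M3) : ℝ := ∑ i, ∑ j, (A i j) ^ 2

/-- symmetric part of a matrix: `sym G = (G + Gᵀ)/2` -/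
def symPart (G : M3) : M3 := (1 / 2 : ℝ) • (G + Gᵀ)

/-- `ι A` : the 3×3 matrix with upper-left 2×2 block `A` and zeros elsewhere -/
def iota (A : M2) : M3 :=
  Matrix.of fun i j =>
    if hi : (i : ℕ) < 2 then (if hj : (j : ℕ) < 2 then A ⟨i, hi⟩ ⟨j, hj⟩ else 0) else 0

/-- `d ⊗ e₃` : the 3×3 matrix whose third column is `d` and whose other entries vanish -/
def tensorE3 (d : Fin 3 → ℝ) : M3 :=
  Matrix.of fun i j => if j = (2 : Fin 3) then d i else 0

/-- the product σ-algebra on 3×3 matrices (entrywise) -/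
instance : MeasurableSpace M3 := inferInstanceAs (MeasurableSpace (Fin 3 → Fin 3 → ℝ))

/-- Frobenius norm of a 3×3 matrix -/
def frobNorm3 (A : M3) : ℝ := Real.sqrt (frobSq3 A)

/-! ### algebra -/

def dot3 (A B : M3) : ℝ := ∑ i, ∑ j, A i j * B i j

def cof3 (F : M3) : M3 := (Matrix.adjugate F)ᵀ

lemma frobSq3_nonneg (A : M3) : 0 ≤ frobSq3 A :=
  Finset.sum_nonneg fun _ _ => Finset.sum_nonneg fun _ _ => sq_nonneg _

lemma frobNorm3_nonneg (A : M3) : 0 ≤ frobNorm3 A := Real.sqrt_nonneg _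

lemma frobNorm3_sq (A : M3) : frobNorm3 A ^ 2 = frobSq3 A :=
  Real.sq_sqrt (frobSq3_nonneg A)

lemma frobSq3_eq_dot3 (A : M3) : frobSq3 A = dot3 A A := by
  unfold frobSq3 dot3; exact Finset.sum_congr rfl fun i _ =>
    Finset.sum_congr rfl fun j _ => sq (A i j) ▸ (pow_two (A i j))

lemma dot3_add_right (A B C : M3) : dot3 A (B + C) = dot3 A B + dot3 A C := by
  unfold dot3
  rw [← Finset.sum_add_distrib]
  refine Finset.sum_congr rfl fun i _ => ?_
  rw [← Finset.sum_add_distrib]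
  exact Finset.sum_congr rfl fun j _ => by simp [Matrix.add_apply, mul_add]

lemma dot3_neg_right (A B : M3) : dot3 A (-B) = - dot3 A B := by
  unfold dot3
  rw [← Finset.sum_neg_distrib]
  refine Finset.sum_congr rfl fun i _ => ?_
  rw [← Finset.sum_neg_distrib]
  exact Finset.sum_congr rfl fun j _ => by simp [Matrix.neg_apply]

lemma dot3_smul_right (c : ℝ) (A B : M3) : dot3 A (c • B) = c * dot3 A B := by
  unfold dot3
  rw [Finset.mul_sum]
  refine Finset.sum_congr rfl fun i _ => ?_
  rw [Finset.mul_sum]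
  exact Finset.sum_congr rfl fun j _ => by simp [Matrix.smul_apply]; ring

lemma abs_entry_le_frobNorm3 (A : M3) (i j : Fin 3) : |A i j| ≤ frobNorm3 A := by
  have h1 : A i j ^ 2 ≤ frobSq3 A := by
    unfold frobSq3
    have h2 : A i j ^ 2 ≤ ∑ j', A i j' ^ 2 :=
      Finset.single_le_sum (fun j' _ => sq_nonneg (A i j')) (Finset.mem_univ j)
    exact h2.trans (Finset.single_le_sum
      (fun i' _ => Finset.sum_nonneg fun j' _ => sq_nonneg (A i' j')) (Finset.mem_univ i))
  calc |A i j| = Real.sqrt (A i j ^ 2) := (Real.sqrt_sq_eq_abs _).symm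
    _ ≤ frobNorm3 A := Real.sqrt_le_sqrt h1

lemma abs_dot3_le (A B : M3) : |dot3 A B| ≤ frobNorm3 A * frobNorm3 B := by
  have key : dot3 A B ^ 2 ≤ frobSq3 A * frobSq3 B := by
    have h1 : dot3 A B = ∑ x ∈ (Finset.univ ×ˢ Finset.univ : Finset (Fin 3 × Fin 3)),
        A x.1 x.2 * B x.1 x.2 := by rw [Finset.sum_product]; rfl
    have h2 : frobSq3 A = ∑ x ∈ (Finset.univ ×ˢ Finset.univ : Finset (Fin 3 × Fin 3)),
        A x.1 x.2 ^ 2 := by rw [Finset.sum_product]; rfl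
    have h3 : frobSq3 B = ∑ x ∈ (Finset.univ ×ˢ Finset.univ : Finset (Fin 3 × Fin 3)),
        B x.1 x.2 ^ 2 := by rw [Finset.sum_product]; rfl
    rw [h1, h2, h3]
    exact Finset.sum_mul_sq_le_sq_mul_sq _ _ _
  calc |dot3 A B| = Real.sqrt (dot3 A B ^ 2) := (Real.sqrt_sq_eq_abs _).symm
    _ ≤ Real.sqrt (frobSq3 A * frobSq3 B) := Real.sqrt_le_sqrt key
    _ = frobNorm3 A * frobNorm3 B := by
        rw [Real.sqrt_mul (frobSq3_nonneg A)]; rfl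

lemma frobSq3_sub_expand (A B : M3) :
    frobSq3 (A - B) = frobSq3 A - 2 * dot3 A B + frobSq3 B := by
  unfold frobSq3 dot3
  rw [Finset.mul_sum, ← Finset.sum_sub_distrib, ← Finset.sum_add_distrib]
  refine Finset.sum_congr rfl fun i _ => ?_
  rw [Finset.mul_sum, ← Finset.sum_sub_distrib, ← Finset.sum_add_distrib]
  exact Finset.sum_congr rfl fun j _ => by simp [Matrix.sub_apply]; ring

lemma two_dot3_sub_le (A B : M3) : 2 * dot3 A B - frobSq3 B ≤ frobSq3 A := by
  have := frobSq3_nonneg (A - B)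
  rw [frobSq3_sub_expand] at this
  linarith

lemma dot3_mul_right_transp (A B C : M3) : dot3 (A * B) C = dot3 A (C * Bᵀ) := by
  unfold dot3
  simp only [Matrix.mul_apply, Matrix.transpose_apply, Finset.sum_mul, Finset.mul_sum]
  refine Finset.sum_congr rfl fun i _ => ?_
  rw [Finset.sum_comm]
  exact Finset.sum_congr rfl fun l _ => Finset.sum_congr rfl fun j _ => by ring

lemma det_smul_inv_eq_adjugate (F : M3) (hd : F.det ≠ 0) :
    F.det • F⁻¹ = Matrix.adjugate F := by
  rw [Matrix.inv_def, smul_smul, Ring.inverse_eq_inv', mul_inv_cancel₀ hd, one_smul]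

/-- key pointwise inequality -/
lemma key_pointwise (G F φ : M3) (hd : 0 < F.det) :
    2 * dot3 G (φ * cof3 F) - frobSq3 φ * F.det ≤ frobSq3 (G * F⁻¹) * F.det := by
  have h1 := two_dot3_sub_le (G * F⁻¹) φ
  have h2 : (2 * dot3 (G * F⁻¹) φ - frobSq3 φ) * F.det ≤ frobSq3 (G * F⁻¹) * F.det :=
    mul_le_mul_of_nonneg_right h1 hd.le
  have h3 : dot3 (G * F⁻¹) φ * F.det = dot3 G (φ * cof3 F) := by
    rw [dot3_mul_right_transp, mul_comm, ← dot3_smul_right]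
    congr 1
    rw [← Matrix.mul_smul, ← Matrix.transpose_smul, det_smul_inv_eq_adjugate F hd.ne']
    rfl
  nlinarith [h3]

/-! ### SO(3) facts -/

section SO3
variable {R : M3} (h1 : Rᵀ * R = 1) (h2 : R.det = 1)

include h1 in
lemma so3_RRT : R * Rᵀ = 1 := mul_eq_one_comm.mp h1

include h1 h2 in
lemma so3_cof : cof3 R = R := by
  have hinv : R⁻¹ = Rᵀ := Matrix.inv_eq_left_inv h1
  have : R⁻¹ = Matrix.adjugate R := by
    rw [Matrix.inv_def, h2]; simp
  unfold cof3
  rw [← this, hinv, Matrix.transpose_transpose]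

include h1 in
lemma so3_entry_abs_le (i j : Fin 3) : |R i j| ≤ 1 := by
  have hc := congrFun (congrFun h1 j) j
  simp only [Matrix.mul_apply, Matrix.transpose_apply, Matrix.one_apply_eq] at hc
  have hsq : R i j * R i j ≤ 1 := by
    rw [← hc]
    exact Finset.single_le_sum (fun l _ => mul_self_nonneg (R l j)) (Finset.mem_univ i)
  nlinarith [abs_nonneg (R i j), abs_mul_abs_self (R i j)]

include h1 in
lemma so3_mul_cancel (A : M3) : (A * Rᵀ) * R = A := by
  rw [Matrix.mul_assoc, h1, Matrix.mul_one]

include h1 in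
lemma so3_frobSq_mul (A : M3) : frobSq3 (A * Rᵀ) = frobSq3 A := by
  rw [frobSq3_eq_dot3, dot3_mul_right_transp, Matrix.transpose_transpose,
    so3_mul_cancel h1, ← frobSq3_eq_dot3]

end SO3

/-! ### quantitative estimates -/

/-- generic product perturbation bound -/
lemma prod_pert {x a y b dx dy A B : ℝ} (h1 : |x - a| ≤ dx) (h2 : |y - b| ≤ dy)
    (ha : |a| ≤ A) (hb : |b| ≤ B) : |x * y - a * b| ≤ dx * (B + dy) + A * dy := by
  have key : x * y - a * b = (x - a) * y + a * (y - b) := by ring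
  have hy : |y| ≤ B + dy := by
    have := abs_sub_abs_le_abs_sub y b
    linarith [abs_nonneg (y - b)]
  calc |x * y - a * b| = |(x - a) * y + a * (y - b)| := by rw [key]
    _ ≤ |(x - a) * y| + |a * (y - b)| := abs_add_le _ _
    _ = |x - a| * |y| + |a| * |y - b| := by rw [abs_mul, abs_mul]
    _ ≤ dx * (B + dy) + A * dy := by
        have hdx0 : 0 ≤ dx := le_trans (abs_nonneg _) h1
        have hA0 : 0 ≤ A := le_trans (abs_nonneg _) ha
        gcongr <;>
          first
            | exact abs_nonneg _
            | assumption
            | linarith [abs_nonneg (y - b), abs_nonneg b]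

lemma prod_pert2 {x a y b d : ℝ} (h1 : |x - a| ≤ d) (h2 : |y - b| ≤ d)
    (ha : |a| ≤ 1) (hb : |b| ≤ 1) (hd : d ≤ 1) : |x * y - a * b| ≤ 3 * d := by
  have := prod_pert h1 h2 ha hb
  have hd0 : 0 ≤ d := le_trans (abs_nonneg _) h1
  nlinarith

lemma prod_pert3 {x a y b z c d : ℝ} (h1 : |x - a| ≤ d) (h2 : |y - b| ≤ d) (h3 : |z - c| ≤ d)
    (ha : |a| ≤ 1) (hb : |b| ≤ 1) (hc : |c| ≤ 1) (hd : d ≤ 1) :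
    |x * y * z - a * b * c| ≤ 7 * d := by
  have hd0 : 0 ≤ d := le_trans (abs_nonneg _) h1
  have hab : |a * b| ≤ 1 := by rw [abs_mul]; exact mul_le_one₀ ha (abs_nonneg _) hb
  have h12 : |x * y - a * b| ≤ 3 * d := prod_pert2 h1 h2 ha hb hd
  have := prod_pert h12 h3 hab hc
  nlinarith

lemma det3_pert (A B : M3) (hAB : ∀ i j, |A i j - B i j| ≤ d) (hB : ∀ i j, |B i j| ≤ 1)
    (hd : d ≤ 1) : |A.det - B.det| ≤ 42 * d := by
  have e1 := prod_pert3 (hAB 0 0) (hAB 1 1) (hAB 2 2) (hB 0 0) (hB 1 1) (hB 2 2) hd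
  have e2 := prod_pert3 (hAB 0 0) (hAB 1 2) (hAB 2 1) (hB 0 0) (hB 1 2) (hB 2 1) hd
  have e3 := prod_pert3 (hAB 0 1) (hAB 1 0) (hAB 2 2) (hB 0 1) (hB 1 0) (hB 2 2) hd
  have e4 := prod_pert3 (hAB 0 1) (hAB 1 2) (hAB 2 0) (hB 0 1) (hB 1 2) (hB 2 0) hd
  have e5 := prod_pert3 (hAB 0 2) (hAB 1 0) (hAB 2 1) (hB 0 2) (hB 1 0) (hB 2 1) hd
  have e6 := prod_pert3 (hAB 0 2) (hAB 1 1) (hAB 2 0) (hB 0 2) (hB 1 1) (hB 2 0) hd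
  rw [Matrix.det_fin_three, Matrix.det_fin_three]
  rw [abs_le] at e1 e2 e3 e4 e5 e6 ⊢
  constructor <;> linarith [e1.1, e1.2, e2.1, e2.2, e3.1, e3.2, e4.1, e4.2, e5.1, e5.2,
    e6.1, e6.2]


lemma mshape1 {x1 y1 x2 y2 a1 b1 a2 b2 d : ℝ} (h1 : |x1*y1 - a1*b1| ≤ 3*d)
    (h2 : |x2*y2 - a2*b2| ≤ 3*d) : |x1*y1 - x2*y2 - (a1*b1 - a2*b2)| ≤ 6*d := by
  rw [abs_le] at h1 h2 ⊢; constructor <;> linarith [h1.1, h1.2, h2.1, h2.2]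

lemma mshape2 {x1 y1 x2 y2 a1 b1 a2 b2 d : ℝ} (h1 : |x1*y1 - a1*b1| ≤ 3*d)
    (h2 : |x2*y2 - a2*b2| ≤ 3*d) :
    |(-(x1*y1) + x2*y2) - (-(a1*b1) + a2*b2)| ≤ 6*d := by
  rw [abs_le] at h1 h2 ⊢; constructor <;> linarith [h1.1, h1.2, h2.1, h2.2]

lemma adjugate3_pert {d : ℝ} (A B : M3) (hAB : ∀ i j, |A i j - B i j| ≤ d)
    (hB : ∀ i j, |B i j| ≤ 1) (hd : d ≤ 1) :
    ∀ i j, |Matrix.adjugate A i j - Matrix.adjugate B i j| ≤ 6 * d := by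
  have P : ∀ r1 c1 r2 c2 : Fin 3, |A r1 c1 * A r2 c2 - B r1 c1 * B r2 c2| ≤ 3*d :=
    fun r1 c1 r2 c2 => prod_pert2 (hAB r1 c1) (hAB r2 c2) (hB r1 c1) (hB r2 c2) hd
  intro i j
  rw [Matrix.adjugate_fin_three, Matrix.adjugate_fin_three]
  fin_cases i <;> fin_cases j <;>
    simp only [Matrix.cons_val', Matrix.cons_val_zero, Matrix.cons_val_one, Matrix.head_cons,
      Matrix.empty_val', Matrix.cons_val_fin_one, Matrix.head_fin_const,
      Matrix.tail_cons, Fin.isValue, Fin.zero_eta, Fin.mk_one, Matrix.cons_val_two] <;>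
    first
      | exact (by norm_num : (6:ℝ)*d = 6*d) ▸ mshape1 (P _ _ _ _) (P _ _ _ _)
      | exact mshape2 (P _ _ _ _) (P _ _ _ _)

lemma frobNorm3_le_of_entries {c : ℝ} (A : M3) (h : ∀ i j, |A i j| ≤ c) :
    frobNorm3 A ≤ 3 * c := by
  have hc : 0 ≤ c := le_trans (abs_nonneg _) (h 0 0)
  have h1 : frobSq3 A ≤ 9 * c ^ 2 := by
    unfold frobSq3
    calc ∑ i, ∑ j, (A i j)^2 ≤ ∑ _i : Fin 3, ∑ _j : Fin 3, c^2 := by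
          refine Finset.sum_le_sum fun i _ => Finset.sum_le_sum fun j _ => ?_
          rw [← sq_abs]; exact pow_le_pow_left₀ (abs_nonneg _) (h i j) 2
      _ = 9 * c^2 := by simp; ring
  calc frobNorm3 A = Real.sqrt (frobSq3 A) := rfl
    _ ≤ Real.sqrt (9 * c^2) := Real.sqrt_le_sqrt h1
    _ = 3 * c := by
        rw [show (9:ℝ)*c^2 = (3*c)^2 by ring, Real.sqrt_sq (by positivity)]

lemma cof3_pert {d : ℝ} (A B : M3) (hAB : ∀ i j, |A i j - B i j| ≤ d)
    (hB : ∀ i j, |B i j| ≤ 1) (hd : d ≤ 1) :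
    frobNorm3 (cof3 A - cof3 B) ≤ 18 * d := by
  have key := adjugate3_pert A B hAB hB hd
  have : frobNorm3 (cof3 A - cof3 B) ≤ 3 * (6 * d) := by
    refine frobNorm3_le_of_entries _ fun i j => ?_
    simpa [cof3, Matrix.sub_apply, Matrix.transpose_apply] using key j i
  linarith

/-! ### measurability -/

instance : BorelSpace M3 := inferInstanceAs (BorelSpace (Fin 3 → Fin 3 → ℝ))

section Meas
variable {α : Type*} [MeasurableSpace α] {f g : α → M3}

lemma meas_entry (hf : Measurable f) (i j : Fin 3) : Measurable fun x => f x i j :=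
  (measurable_pi_apply j).comp ((measurable_pi_apply i).comp hf)

lemma meas_frobSq3 (hf : Measurable f) : Measurable fun x => frobSq3 (f x) := by
  unfold frobSq3
  exact Finset.measurable_sum _ fun i _ => Finset.measurable_sum _ fun j _ =>
    (meas_entry hf i j).pow_const 2

lemma meas_frobNorm3 (hf : Measurable f) : Measurable fun x => frobNorm3 (f x) :=
  (meas_frobSq3 hf).sqrt

lemma meas_dot3 (hf : Measurable f) (hg : Measurable g) :
    Measurable fun x => dot3 (f x) (g x) := by
  unfold dot3
  exact Finset.measurable_sum _ fun i _ => Finset.measurable_sum _ fun j _ =>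
    (meas_entry hf i j).mul (meas_entry hg i j)

lemma meas_matmul (hf : Measurable f) (hg : Measurable g) :
    Measurable fun x => f x * g x := by
  refine measurable_pi_lambda _ fun i => measurable_pi_lambda _ fun j => ?_
  simp only [Matrix.mul_apply]
  exact Finset.measurable_sum _ fun l _ => (meas_entry hf i l).mul (meas_entry hg l j)

lemma meas_transpose (hf : Measurable f) : Measurable fun x => (f x)ᵀ :=
  measurable_pi_lambda _ fun i => measurable_pi_lambda _ fun j => meas_entry hf j i

lemma meas_det (hf : Measurable f) : Measurable fun x => (f x).det :=
  (continuous_id.matrix_det.measurable).comp hf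

lemma meas_cof3 (hf : Measurable f) : Measurable fun x => cof3 (f x) :=
  ((continuous_id.matrix_adjugate.matrix_transpose).measurable).comp hf

lemma meas_inv3 (hf : Measurable f) : Measurable fun x => (f x)⁻¹ := by
  have : ∀ x, (f x)⁻¹ = Ring.inverse (f x).det • Matrix.adjugate (f x) := fun x =>
    Matrix.inv_def (f x)
  simp only [this, Ring.inverse_eq_inv']
  refine measurable_pi_lambda _ fun i => measurable_pi_lambda _ fun j => ?_
  simp only [Matrix.smul_apply, smul_eq_mul]
  exact ((meas_det hf).inv).mul
    ((((continuous_id (X := M3)).matrix_adjugate.measurable).comp hf).eval.eval)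

end Meas

/-! ### MemLp / lintegral conversions -/

section MemLp
variable {α : Type*} [MeasurableSpace α] {μ : MeasureTheory.Measure α}

lemma lint_ofReal_rpow_eq {f : α → ℝ} (h0 : ∀ x, 0 ≤ f x) {r : ℝ} (hr : 0 < r) :
    ∫⁻ x, ENNReal.ofReal (f x ^ r) ∂μ = ∫⁻ x, (‖f x‖₊ : ℝ≥0∞) ^ r ∂μ :=
  lintegral_congr fun x => by
    rw [← enorm_eq_nnnorm, Real.enorm_eq_ofReal (h0 x), ENNReal.ofReal_rpow_of_nonneg (h0 x) hr.le]

lemma memLp_iff_lint {f : α → ℝ} (hf : Measurable f) (h0 : ∀ x, 0 ≤ f x) {r : ℝ}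
    (hr : 0 < r) :
    MemLp f (ENNReal.ofReal r) μ ↔ (∫⁻ x, ENNReal.ofReal (f x ^ r) ∂μ) < ⊤ := by
  have hne : (ENNReal.ofReal r) ≠ 0 := by
    simp only [ne_eq, ENNReal.ofReal_eq_zero, not_le]; exact hr
  have hsnorm : eLpNorm f (ENNReal.ofReal r) μ
      = (∫⁻ x, (‖f x‖₊ : ℝ≥0∞) ^ r ∂μ) ^ (1 / r) := by
    rw [eLpNorm_eq_lintegral_rpow_enorm_toReal hne ENNReal.ofReal_ne_top,
      ENNReal.toReal_ofReal hr.le]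
    simp only [enorm_eq_nnnorm]
  rw [lint_ofReal_rpow_eq h0 hr]
  constructor
  · intro h
    have h2 := h.2
    rw [hsnorm, ENNReal.rpow_lt_top_iff_of_pos (by positivity : (0:ℝ) < 1/r)] at h2
    exact h2
  · intro h
    refine ⟨hf.aestronglyMeasurable, ?_⟩
    rw [hsnorm]
    exact ENNReal.rpow_lt_top_of_nonneg (by positivity) h.ne

lemma ofReal_int_le {f : α → ℝ} (hf : Integrable f μ) :
    ENNReal.ofReal (∫ x, f x ∂μ) ≤ ∫⁻ x, ENNReal.ofReal (f x) ∂μ := by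
  have hmax : Integrable (fun x => max (f x) 0) μ := hf.pos_part
  have h1 : ∫ x, f x ∂μ ≤ ∫ x, max (f x) 0 ∂μ :=
    integral_mono hf hmax fun x => le_max_left _ _
  calc ENNReal.ofReal (∫ x, f x ∂μ) ≤ ENNReal.ofReal (∫ x, max (f x) 0 ∂μ) :=
        ENNReal.ofReal_le_ofReal h1
    _ = ∫⁻ x, ENNReal.ofReal (max (f x) 0) ∂μ :=
        ofReal_integral_eq_lintegral_ofReal hmax (ae_of_all _ fun x => le_max_right _ _)
    _ = ∫⁻ x, ENNReal.ofReal (f x) ∂μ := lintegral_congr fun x => by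
        rcases le_total (f x) 0 with h | h
        · rw [max_eq_right h, ENNReal.ofReal_of_nonpos h]; simp
        · rw [max_eq_left h]

end MemLp

/-! ### uniform boundedness from weak convergence -/

section UBP
variable {α : Type*} [MeasurableSpace α] {μ : MeasureTheory.Measure α}

lemma conj_inv_add {p q : ℝ} (hpq : Real.HolderConjugate p q) :
    1 / (1 : ℝ≥0∞) = 1 / ENNReal.ofReal p + 1 / ENNReal.ofReal q := by
  rw [one_div, one_div, one_div, inv_one, ← ENNReal.ofReal_inv_of_pos hpq.pos,
    ← ENNReal.ofReal_inv_of_pos hpq.symm.pos,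
    ← ENNReal.ofReal_add (inv_nonneg.mpr hpq.nonneg) (inv_nonneg.mpr hpq.symm.nonneg),
    hpq.inv_add_inv_eq_one,
    ENNReal.ofReal_one]

lemma holder_integrable {p q : ℝ} (hpq : Real.HolderConjugate p q) {g f : α → ℝ}
    (hg : MeasureTheory.MemLp g (ENNReal.ofReal p) μ)
    (hf : MeasureTheory.MemLp f (ENNReal.ofReal q) μ) :
    MeasureTheory.Integrable (fun x => g x * f x) μ := by
  haveI : ENNReal.HolderTriple (ENNReal.ofReal p) (ENNReal.ofReal q) 1 :=
    ⟨by rw [← one_div, ← one_div, ← one_div]; exact (conj_inv_add hpq).symm⟩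
  have h1 : MeasureTheory.MemLp (g • f) 1 μ := hf.smul hg
  rw [MeasureTheory.memLp_one_iff_integrable] at h1
  exact h1

lemma weak_uniform_bound {p q : ℝ} (hpq : Real.HolderConjugate p q) (g : ℕ → α → ℝ)
    (hg : ∀ k, MeasureTheory.MemLp (g k) (ENNReal.ofReal p) μ)
    (hconv : ∀ f : α → ℝ, Measurable f → MeasureTheory.MemLp f (ENNReal.ofReal q) μ →
      ∃ L : ℝ, Tendsto (fun k => ∫ x, g k x * f x ∂μ) atTop (𝓝 L)) :
    ∃ C : ℝ, 0 ≤ C ∧ ∀ k, ∀ f : α → ℝ, MeasureTheory.MemLp f (ENNReal.ofReal q) μ →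
      |∫ x, g k x * f x ∂μ| ≤ C * (eLpNorm f (ENNReal.ofReal q) μ).toReal := by
  haveI : Fact (1 ≤ ENNReal.ofReal q) :=
    ⟨by rw [← ENNReal.ofReal_one]; exact ENNReal.ofReal_le_ofReal hpq.symm.lt.le⟩
  set qe := ENNReal.ofReal q with hqe
  have hqe0 : qe ≠ 0 := by
    simp only [hqe, ne_eq, ENNReal.ofReal_eq_zero, not_le]; exact hpq.symm.pos
  -- the pairing functionals
  have hint : ∀ k (F : Lp ℝ qe μ), MeasureTheory.Integrable (fun x => g k x * F x) μ :=
    fun k F => holder_integrable hpq (hg k) (Lp.memLp F)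
  have hnorm_eq : ∀ F : Lp ℝ qe μ, (∫ x, ‖F x‖ ^ q ∂μ) ^ (1/q) = ‖F‖ := by
    intro F
    rw [MeasureTheory.Lp.norm_def,
      (Lp.memLp F).eLpNorm_eq_integral_rpow_norm hqe0 ENNReal.ofReal_ne_top,
      ENNReal.toReal_ofReal (by positivity), ENNReal.toReal_ofReal hpq.symm.nonneg,
      one_div]
  set T : ℕ → Lp ℝ qe μ →L[ℝ] ℝ := fun k =>
    LinearMap.mkContinuous
      { toFun := fun F => ∫ x, g k x * F x ∂μ
        map_add' := by
          intro F G
          have hae : (fun x => g k x * ((F + G : Lp ℝ qe μ) x))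
              =ᵐ[μ] fun x => g k x * F x + g k x * G x := by
            filter_upwards [Lp.coeFn_add F G] with x hx
            rw [hx]; simp [mul_add]
          rw [MeasureTheory.integral_congr_ae hae,
            MeasureTheory.integral_add (hint k F) (hint k G)]
        map_smul' := by
          intro c F
          have hae : (fun x => g k x * ((c • F : Lp ℝ qe μ) x))
              =ᵐ[μ] fun x => c * (g k x * F x) := by
            filter_upwards [Lp.coeFn_smul c F] with x hx
            rw [hx]; simp [smul_eq_mul]; ring
          rw [MeasureTheory.integral_congr_ae hae, MeasureTheory.integral_const_mul]
          simp }
      ((∫ x, ‖g k x‖ ^ p ∂μ) ^ (1/p))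
      (by
        intro F
        simp only [LinearMap.coe_mk, AddHom.coe_mk]
        have h1 : ‖∫ x, g k x * F x ∂μ‖ ≤ ∫ x, ‖g k x‖ * ‖F x‖ ∂μ := by
          refine (MeasureTheory.norm_integral_le_integral_norm _).trans ?_
          refine le_of_eq (MeasureTheory.integral_congr_ae (ae_of_all _ fun x => ?_))
          simp [norm_mul]
        refine h1.trans ?_
        rw [← hnorm_eq F]
        exact MeasureTheory.integral_mul_norm_le_Lp_mul_Lq hpq (hg k) (Lp.memLp F))
    with hT
  have hTapply : ∀ k (F : Lp ℝ qe μ), T k F = ∫ x, g k x * F x ∂μ := fun k F => rfl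
  -- pointwise boundedness
  have hpt : ∀ F : Lp ℝ qe μ, ∃ C, ∀ k, ‖T k F‖ ≤ C := by
    intro F
    have hFm := (Lp.aestronglyMeasurable F).aemeasurable
    set f' := hFm.mk _ with hf'
    have hf'meas : Measurable f' := hFm.measurable_mk
    have hf'ae : (F : α → ℝ) =ᵐ[μ] f' := hFm.ae_eq_mk
    have hf'Lp : MeasureTheory.MemLp f' qe μ := (Lp.memLp F).ae_eq hf'ae
    obtain ⟨L, hL⟩ := hconv f' hf'meas hf'Lp
    have heq : ∀ k, T k F = ∫ x, g k x * f' x ∂μ := by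
      intro k
      rw [hTapply]
      refine MeasureTheory.integral_congr_ae ?_
      filter_upwards [hf'ae] with x hx
      rw [hx]
    have hL' : Tendsto (fun k => ‖T k F‖) atTop (𝓝 ‖L‖) := by
      simp_rw [heq]
      exact hL.norm
    obtain ⟨C, hC⟩ := hL'.bddAbove_range
    exact ⟨C, fun k => hC (Set.mem_range_self k)⟩
  obtain ⟨C', hC'⟩ := banach_steinhaus hpt
  refine ⟨max C' 0, le_max_right _ _, ?_⟩
  intro k f hf
  have h1 : ∫ x, g k x * f x ∂μ = T k (hf.toLp f) := by
    rw [hTapply]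
    refine MeasureTheory.integral_congr_ae ?_
    filter_upwards [hf.coeFn_toLp] with x hx
    rw [hx]
  rw [h1, ← Real.norm_eq_abs]
  calc ‖T k (hf.toLp f)‖ ≤ ‖T k‖ * ‖hf.toLp f‖ := (T k).le_opNorm _
    _ ≤ max C' 0 * (eLpNorm f qe μ).toReal := by
        rw [MeasureTheory.Lp.norm_toLp]
        exact mul_le_mul ((hC' k).trans (le_max_left _ _)) le_rfl
          ENNReal.toReal_nonneg (le_max_right _ _)

end UBP

/-! ### extra matrix lemmas -/

lemma frobSq3_smul (a : ℝ) (A : M3) : frobSq3 (a • A) = a^2 * frobSq3 A := by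
  unfold frobSq3
  rw [Finset.mul_sum]
  refine Finset.sum_congr rfl fun i _ => ?_
  rw [Finset.mul_sum]
  exact Finset.sum_congr rfl fun j _ => by simp [Matrix.smul_apply]; ring

lemma frobNorm3_smul (a : ℝ) (A : M3) : frobNorm3 (a • A) = |a| * frobNorm3 A := by
  unfold frobNorm3
  rw [frobSq3_smul, Real.sqrt_mul (sq_nonneg a), Real.sqrt_sq_eq_abs]

lemma frobSq3_neg (A : M3) : frobSq3 (-A) = frobSq3 A := by
  unfold frobSq3
  exact Finset.sum_congr rfl fun i _ => Finset.sum_congr rfl fun j _ => by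
    simp [Matrix.neg_apply]

lemma frobNorm3_neg (A : M3) : frobNorm3 (-A) = frobNorm3 A := by
  unfold frobNorm3; rw [frobSq3_neg]

lemma frobSq3_zero : frobSq3 (0 : M3) = 0 := by
  unfold frobSq3; simp

lemma frobNorm3_zero : frobNorm3 (0 : M3) = 0 := by
  unfold frobNorm3; rw [frobSq3_zero, Real.sqrt_zero]

lemma frobNorm3_eq_of_frobSq3_eq {A B : M3} (h : frobSq3 A = frobSq3 B) :
    frobNorm3 A = frobNorm3 B := by unfold frobNorm3; rw [h]

lemma frobNorm3_mul_le (A B : M3) : frobNorm3 (A * B) ≤ frobNorm3 A * frobNorm3 B := by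
  have key : frobSq3 (A * B) ≤ frobSq3 A * frobSq3 B := by
    unfold frobSq3
    calc ∑ i, ∑ j, ((A * B) i j)^2
        ≤ ∑ i, ∑ j, (∑ l, (A i l)^2) * (∑ l, (B l j)^2) := by
          refine Finset.sum_le_sum fun i _ => Finset.sum_le_sum fun j _ => ?_
          rw [Matrix.mul_apply]
          exact Finset.sum_mul_sq_le_sq_mul_sq _ _ _
      _ = (∑ i, ∑ l, (A i l)^2) * (∑ j, ∑ l, (B l j)^2) := by
          rw [Finset.sum_mul_sum]
      _ = (∑ i, ∑ j, (A i j)^2) * (∑ i, ∑ j, (B i j)^2) := by rw [Finset.sum_comm (s := Finset.univ) (t := Finset.univ) (f := fun l j => (B l j)^2)]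
  calc frobNorm3 (A * B) = Real.sqrt (frobSq3 (A * B)) := rfl
    _ ≤ Real.sqrt (frobSq3 A * frobSq3 B) := Real.sqrt_le_sqrt key
    _ = frobNorm3 A * frobNorm3 B := by rw [Real.sqrt_mul (frobSq3_nonneg A)]; rfl

section Meas2
variable {α : Type*} [MeasurableSpace α] {f g : α → M3}

lemma meas_matsub (hf : Measurable f) (hg : Measurable g) :
    Measurable fun x => f x - g x := by
  refine measurable_pi_lambda _ fun i => measurable_pi_lambda _ fun j => ?_
  have : (fun x => (f x - g x) i j) = fun x => f x i j - g x i j := by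
    funext x; simp [Matrix.sub_apply]
  rw [this]
  exact (meas_entry hf i j).sub (meas_entry hg i j)

lemma meas_matadd (hf : Measurable f) (hg : Measurable g) :
    Measurable fun x => f x + g x := by
  refine measurable_pi_lambda _ fun i => measurable_pi_lambda _ fun j => ?_
  have : (fun x => (f x + g x) i j) = fun x => f x i j + g x i j := by
    funext x; simp [Matrix.add_apply]
  rw [this]
  exact (meas_entry hf i j).add (meas_entry hg i j)

lemma meas_matneg (hf : Measurable f) : Measurable fun x => -(f x) := by
  refine measurable_pi_lambda _ fun i => measurable_pi_lambda _ fun j => ?_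
  have : (fun x => (-(f x)) i j) = fun x => -(f x i j) := by
    funext x; simp [Matrix.neg_apply]
  rw [this]
  exact (meas_entry hf i j).neg

end Meas2


set_option maxHeartbeats 1000000 in
/-- weak-`Lᵖ` lower semicontinuity of the transported Dirichlet energy:
if `G_k ⇀ G` weakly in `Lᵖ(Ω)` (`1 < p < 2`, `p' = p/(p−1)`), `det F_k > 0` a.e.,
`R ∈ SO(3)` a.e. and `F_k → R` in `L²(Ω)`, then
`∫_Ω |G|² ≤ liminf_k ∫_Ω |G_k F_k⁻¹|² det F_k` (both sides in `[0,∞]`). -/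
theorem statement13 (Ω : Set (Fin 3 → ℝ)) (hΩ : MeasurableSet Ω)
    (hfin : volume Ω < ⊤)
    (p : ℝ) (hp1 : 1 < p) (hp2 : p < 2)
    (G : ℕ → (Fin 3 → ℝ) → M3) (Gl : (Fin 3 → ℝ) → M3)
    (hGmeas : ∀ k, Measurable (G k)) (hGlmeas : Measurable Gl)
    (hGint : ∀ k,
      (∫⁻ x in Ω, ENNReal.ofReal (frobNorm3 (G k x) ^ p)) < ⊤)
    (hGlint : (∫⁻ x in Ω, ENNReal.ofReal (frobNorm3 (Gl x) ^ p)) < ⊤)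
    (hweak : ∀ φ : (Fin 3 → ℝ) → M3, Measurable φ →
      (∫⁻ x in Ω, ENNReal.ofReal (frobNorm3 (φ x) ^ (p / (p - 1)))) < ⊤ →
      Tendsto (fun k => ∫ x in Ω, ∑ i, ∑ j, G k x i j * φ x i j) atTop
        (𝓝 (∫ x in Ω, ∑ i, ∑ j, Gl x i j * φ x i j)))
    (F : ℕ → (Fin 3 → ℝ) → M3) (hFmeas : ∀ k, Measurable (F k))
    (hFdet : ∀ k, ∀ᵐ x ∂(volume.restrict Ω), 0 < (F k x).det)
    (R : (Fin 3 → ℝ) → M3) (hRmeas : Measurable R)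
    (hSO : ∀ᵐ x ∂(volume.restrict Ω), (R x)ᵀ * R x = 1 ∧ (R x).det = 1)
    (hFconv : Tendsto (fun k => ∫⁻ x in Ω, ENNReal.ofReal (frobSq3 (F k x - R x)))
      atTop (𝓝 0)) :
    (∫⁻ x in Ω, ENNReal.ofReal (frobSq3 (Gl x)))
      ≤ Filter.liminf
          (fun k => ∫⁻ x in Ω,
            ENNReal.ofReal (frobSq3 (G k x * (F k x)⁻¹) * (F k x).det)) atTop := by
  set μ : Measure (Fin 3 → ℝ) := volume.restrict Ω with hμdef
  haveI hfinμ : IsFiniteMeasure μ := by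
    constructor; rwa [hμdef, Measure.restrict_apply_univ]
  set q : ℝ := p / (p - 1) with hqdef
  have hp0 : 0 < p := lt_trans one_pos hp1
  have hpm1 : 0 < p - 1 := by linarith
  have hpq : Real.HolderConjugate p q := by
    rw [Real.holderConjugate_iff]
    constructor
    · exact hp1
    · rw [hqdef]; field_simp; ring
  have hq0 : 0 < q := hpq.symm.pos
  have hq1 : 1 < q := hpq.symm.lt
  have hpe1 : (1:ℝ≥0∞) ≤ ENNReal.ofReal p := by
    rw [← ENNReal.ofReal_one]; exact ENNReal.ofReal_le_ofReal hp1.le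
  have hqe1 : (1:ℝ≥0∞) ≤ ENNReal.ofReal q := by
    rw [← ENNReal.ofReal_one]; exact ENNReal.ofReal_le_ofReal hq1.le
  have hμuniv : μ Set.univ < ⊤ := by rw [hμdef, Measure.restrict_apply_univ]; exact hfin
  -- MemLp facts
  have hGN : ∀ k, MemLp (fun x => frobNorm3 (G k x)) (ENNReal.ofReal p) μ := fun k =>
    (memLp_iff_lint (meas_frobNorm3 (hGmeas k)) (fun x => frobNorm3_nonneg _) hp0).mpr
      (hGint k)
  have hGlN : MemLp (fun x => frobNorm3 (Gl x)) (ENNReal.ofReal p) μ :=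
    (memLp_iff_lint (meas_frobNorm3 hGlmeas) (fun x => frobNorm3_nonneg _) hp0).mpr hGlint
  have hGe : ∀ k (i j : Fin 3), MemLp (fun x => G k x i j) (ENNReal.ofReal p) μ := by
    intro k i j
    refine (hGN k).of_le (meas_entry (hGmeas k) i j).aestronglyMeasurable
      (ae_of_all _ fun x => ?_)
    rw [Real.norm_eq_abs, Real.norm_eq_abs, abs_of_nonneg (frobNorm3_nonneg _)]
    exact abs_entry_le_frobNorm3 _ i j
  have hGNint : ∀ k, Integrable (fun x => frobNorm3 (G k x)) μ := fun k =>
    (hGN k).integrable hpe1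
  have hGlNint : Integrable (fun x => frobNorm3 (Gl x)) μ := hGlN.integrable hpe1
  -- uniform bound from Banach-Steinhaus
  have hUB : ∀ i j : Fin 3, ∃ C : ℝ, 0 ≤ C ∧ ∀ k, ∀ f : (Fin 3 → ℝ) → ℝ,
      MemLp f (ENNReal.ofReal q) μ →
      |∫ x, G k x i j * f x ∂μ| ≤ C * (eLpNorm f (ENNReal.ofReal q) μ).toReal := by
    intro i j
    refine weak_uniform_bound hpq (fun k x => G k x i j) (fun k => hGe k i j) ?_
    intro f hfmeas hfLp
    set φf : (Fin 3 → ℝ) → M3 := fun x =>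
      Matrix.of (fun a b => if a = i then (if b = j then f x else 0) else 0) with hφfdef
    have hφfmeas : Measurable φf := by
      refine measurable_pi_lambda _ fun a => measurable_pi_lambda _ fun b => ?_
      simp only [hφfdef, Matrix.of_apply]
      split_ifs
      · exact hfmeas
      · exact measurable_const
      · exact measurable_const
    have hsum : ∀ (M : M3) x, (∑ a, ∑ b, M a b * φf x a b) = M i j * f x := by
      intro M x
      simp only [hφfdef, Matrix.of_apply, mul_ite, mul_zero]
      rw [Finset.sum_eq_single i (fun a _ ha => by simp [ha]) (by simp)]
      simp only [if_pos rfl]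
      rw [Finset.sum_eq_single j (fun b _ hb => by simp [hb]) (by simp)]
      simp
    have hφfN : ∀ x, frobNorm3 (φf x) = |f x| := by
      intro x
      unfold frobNorm3 frobSq3
      have : ∑ a, ∑ b, (φf x a b)^2 = f x ^ 2 := by
        simp only [hφfdef, Matrix.of_apply, ite_pow, ne_eq, OfNat.ofNat_ne_zero,
          not_false_eq_true, zero_pow]
        rw [Finset.sum_eq_single i (fun a _ ha => by simp [ha]) (by simp)]
        simp only [if_pos rfl]
        rw [Finset.sum_eq_single j (fun b _ hb => by simp [hb]) (by simp)]
        simp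
      rw [this, Real.sqrt_sq_eq_abs]
    have hfint : (∫⁻ x, ENNReal.ofReal (frobNorm3 (φf x) ^ q) ∂μ) < ⊤ := by
      have habs : MemLp (fun x => |f x|) (ENNReal.ofReal q) μ := hfLp.abs
      have := (memLp_iff_lint (hfmeas.abs) (fun x => abs_nonneg _) hq0).mp habs
      simpa only [hφfN] using this
    have htd := hweak φf hφfmeas hfint
    refine ⟨∫ x, Gl x i j * f x ∂μ, ?_⟩
    have he1 : (fun k => ∫ x in Ω, ∑ a, ∑ b, G k x a b * φf x a b)
        = fun k => ∫ x, G k x i j * f x ∂μ := by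
      funext k
      exact integral_congr_ae (ae_of_all _ fun x => hsum (G k x) x)
    have he2 : (∫ x in Ω, ∑ a, ∑ b, Gl x a b * φf x a b) = ∫ x, Gl x i j * f x ∂μ :=
      integral_congr_ae (ae_of_all _ fun x => hsum (Gl x) x)
    rw [he1, he2] at htd
    exact htd
  obtain ⟨C, hC0, hCb⟩ : ∃ C : ℝ, 0 ≤ C ∧ ∀ (i j : Fin 3) k (f : (Fin 3 → ℝ) → ℝ),
      MemLp f (ENNReal.ofReal q) μ →
      |∫ x, G k x i j * f x ∂μ| ≤ C * (eLpNorm f (ENNReal.ofReal q) μ).toReal := by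
    choose Cf hCf0 hCf using hUB
    refine ⟨∑ i, ∑ j, Cf i j, Finset.sum_nonneg fun i _ =>
      Finset.sum_nonneg fun j _ => hCf0 i j, ?_⟩
    intro i j k f hf
    refine (hCf i j k f hf).trans ?_
    refine mul_le_mul_of_nonneg_right ?_ ENNReal.toReal_nonneg
    calc Cf i j ≤ ∑ j', Cf i j' :=
          Finset.single_le_sum (fun j' _ => hCf0 i j') (Finset.mem_univ j)
      _ ≤ ∑ i', ∑ j', Cf i' j' :=
          Finset.single_le_sum (fun i' _ => Finset.sum_nonneg fun j' _ => hCf0 i' j')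
            (Finset.mem_univ i)
  -- reduce to truncations
  suffices H : ∀ n : ℕ, (∫⁻ x, ENNReal.ofReal (min (frobNorm3 (Gl x)) ((n:ℝ)+1) ^ 2) ∂μ)
      ≤ Filter.liminf (fun k => ∫⁻ x,
        ENNReal.ofReal (frobSq3 (G k x * (F k x)⁻¹) * (F k x).det) ∂μ) atTop by
    have hmeas_n : ∀ n : ℕ, Measurable fun x =>
        ENNReal.ofReal (min (frobNorm3 (Gl x)) ((n:ℝ)+1) ^ 2) := fun n =>
      (((meas_frobNorm3 hGlmeas).min measurable_const).pow_const 2).ennreal_ofReal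
    have hmono : Monotone (fun n : ℕ => fun x =>
        ENNReal.ofReal (min (frobNorm3 (Gl x)) ((n:ℝ)+1) ^ 2)) := by
      intro m n hmn x
      refine ENNReal.ofReal_le_ofReal ?_
      have hcast : ((m:ℝ)+1) ≤ ((n:ℝ)+1) := by
        have : (m:ℝ) ≤ (n:ℝ) := Nat.cast_le.mpr hmn
        linarith
      have h1 : min (frobNorm3 (Gl x)) ((m:ℝ)+1) ≤ min (frobNorm3 (Gl x)) ((n:ℝ)+1) :=
        min_le_min le_rfl hcast
      exact pow_le_pow_left₀
        (le_min (frobNorm3_nonneg _) (by positivity)) h1 2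
    have hsup : (fun x => ENNReal.ofReal (frobSq3 (Gl x)))
        = fun x => ⨆ n : ℕ, ENNReal.ofReal (min (frobNorm3 (Gl x)) ((n:ℝ)+1) ^ 2) := by
      funext x
      apply le_antisymm
      · have he : frobSq3 (Gl x)
            = min (frobNorm3 (Gl x)) ((⌈frobNorm3 (Gl x)⌉₊ : ℝ)+1) ^ 2 := by
          rw [min_eq_left (le_trans (Nat.le_ceil _) (by linarith)), frobNorm3_sq]
        rw [he]
        exact le_iSup (fun n : ℕ =>
          ENNReal.ofReal (min (frobNorm3 (Gl x)) ((n:ℝ)+1) ^ 2)) _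
      · refine iSup_le fun n => ENNReal.ofReal_le_ofReal ?_
        rw [← frobNorm3_sq]
        exact pow_le_pow_left₀ (le_min (frobNorm3_nonneg _) (by positivity))
          (min_le_left _ _) 2
    calc (∫⁻ x, ENNReal.ofReal (frobSq3 (Gl x)) ∂μ)
        = ∫⁻ x, ⨆ n : ℕ, ENNReal.ofReal (min (frobNorm3 (Gl x)) ((n:ℝ)+1) ^ 2) ∂μ := by
          rw [← hsup]
      _ = ⨆ n : ℕ, ∫⁻ x, ENNReal.ofReal (min (frobNorm3 (Gl x)) ((n:ℝ)+1) ^ 2) ∂μ :=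
          lintegral_iSup hmeas_n hmono
      _ ≤ _ := iSup_le H
  intro n
  set c : ℝ := (n:ℝ) + 1 with hcdef
  have hc0 : 0 < c := by positivity
  -- truncation of Gl
  set φ₀ : (Fin 3 → ℝ) → M3 := fun x =>
    if frobNorm3 (Gl x) ≤ c then Gl x else (c / frobNorm3 (Gl x)) • Gl x with hφ₀def
  have hφ₀meas : Measurable φ₀ := by
    have hset : MeasurableSet {x | frobNorm3 (Gl x) ≤ c} :=
      measurableSet_le (meas_frobNorm3 hGlmeas) measurable_const
    refine Measurable.ite hset hGlmeas ?_
    refine measurable_pi_lambda _ fun i => measurable_pi_lambda _ fun j => ?_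
    have : (fun x => ((c / frobNorm3 (Gl x)) • Gl x) i j)
        = fun x => (c / frobNorm3 (Gl x)) * Gl x i j := by
      funext x; simp [Matrix.smul_apply]
    rw [this]
    exact (measurable_const.div (meas_frobNorm3 hGlmeas)).mul (meas_entry hGlmeas i j)
  have hφ₀N : ∀ x, frobNorm3 (φ₀ x) ≤ c := by
    intro x
    rw [hφ₀def]
    dsimp only
    split_ifs with h
    · exact h
    · push_neg at h
      have hN0 : 0 < frobNorm3 (Gl x) := lt_trans hc0 h
      rw [frobNorm3_smul, abs_of_nonneg (by positivity), div_mul_cancel₀ _ hN0.ne']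
  have hφ₀Sq : ∀ x, frobSq3 (φ₀ x) ≤ c^2 := by
    intro x
    rw [← frobNorm3_sq]
    exact pow_le_pow_left₀ (frobNorm3_nonneg _) (hφ₀N x) 2
  have hdot₀ : ∀ x, min (frobNorm3 (Gl x)) c ^ 2
      ≤ 2 * dot3 (Gl x) (φ₀ x) - frobSq3 (φ₀ x) := by
    intro x
    rw [hφ₀def]
    dsimp only
    split_ifs with h
    · rw [min_eq_left h, frobNorm3_sq, ← frobSq3_eq_dot3]
      ring_nf
      exact le_refl _
    · push_neg at h
      have hN0 : 0 < frobNorm3 (Gl x) := lt_trans hc0 h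
      rw [min_eq_right h.le, dot3_smul_right, frobSq3_smul, ← frobSq3_eq_dot3,
        ← frobNorm3_sq]
      have hNe : frobNorm3 (Gl x) ≠ 0 := hN0.ne'
      have e1 : c / frobNorm3 (Gl x) * frobNorm3 (Gl x) ^ 2 = c * frobNorm3 (Gl x) := by
        field_simp
      have e2 : (c / frobNorm3 (Gl x)) ^ 2 * frobNorm3 (Gl x) ^ 2 = c^2 := by
        field_simp
      rw [e1, e2]
      nlinarith [h, hc0]
  set φ : (Fin 3 → ℝ) → M3 := fun x => φ₀ x * (R x)ᵀ with hφdef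
  set ψ : (Fin 3 → ℝ) → M3 := fun x => φ x * R x with hψdef
  have hφmeas : Measurable φ := meas_matmul hφ₀meas (meas_transpose hRmeas)
  have hψmeas : Measurable ψ := meas_matmul hφmeas hRmeas
  -- main weak-limit term
  have hψae : ∀ᵐ x ∂μ, ψ x = φ₀ x := by
    filter_upwards [hSO] with x hx
    rw [hψdef, hφdef]
    exact so3_mul_cancel hx.1 (φ₀ x)
  have hP : Tendsto (fun k => ∫ x, dot3 (G k x) (ψ x) ∂μ) atTop
      (𝓝 (∫ x, dot3 (Gl x) (ψ x) ∂μ)) := by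
    have hfint : (∫⁻ x, ENNReal.ofReal (frobNorm3 (ψ x) ^ q) ∂μ) < ⊤ := by
      have hb : ∀ᵐ x ∂μ, ENNReal.ofReal (frobNorm3 (ψ x) ^ q)
          ≤ ENNReal.ofReal (c ^ q) := by
        filter_upwards [hψae] with x hx
        refine ENNReal.ofReal_le_ofReal ?_
        rw [hx]
        exact Real.rpow_le_rpow (frobNorm3_nonneg _) (hφ₀N x) hq0.le
      calc (∫⁻ x, ENNReal.ofReal (frobNorm3 (ψ x) ^ q) ∂μ)
          ≤ ∫⁻ _x, ENNReal.ofReal (c ^ q) ∂μ := lintegral_mono_ae hb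
        _ = ENNReal.ofReal (c ^ q) * μ Set.univ := lintegral_const _
        _ < ⊤ := ENNReal.mul_lt_top ENNReal.ofReal_lt_top hμuniv
    exact hweak ψ hψmeas hfint
  set P : ℝ := ∫ x, dot3 (Gl x) (ψ x) ∂μ with hPdef
  set Sφ : ℝ := ∫ x, frobSq3 (φ₀ x) ∂μ with hSφdef
  have hSφ0 : 0 ≤ Sφ := integral_nonneg fun x => frobSq3_nonneg _
  set Mq : ℝ := (μ Set.univ ^ (q : ℝ)⁻¹).toReal with hMqdef
  set K : ℝ := 18 * C * Mq * c + Sφ with hKdef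
  set T0 : ℝ := 2 * P - Sφ with hT0def
  -- the main estimate, for every small r
  have claim : ∀ r : ℝ, 0 < r → r ≤ 1 → ENNReal.ofReal (T0 - r * K)
      ≤ Filter.liminf (fun k => ∫⁻ x,
        ENNReal.ofReal (frobSq3 (G k x * (F k x)⁻¹) * (F k x).det) ∂μ) atTop := by
    intro r hr0 hr1
    set δ : ℝ := r / 42 with hδdef
    have hδ0 : 0 < δ := by positivity
    have hδ1 : δ ≤ 1 := by rw [hδdef]; linarith
    have h42 : 42 * δ = r := by rw [hδdef]; ring
    have hqe0' : (ENNReal.ofReal q) ≠ 0 := by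
      simp only [ne_eq, ENNReal.ofReal_eq_zero, not_le]; exact hq0
    -- bad sets
    set Bad : ℕ → Set (Fin 3 → ℝ) :=
      fun k => {x | frobNorm3 (F k x - R x) ≤ δ}ᶜ with hBaddef
    have hsetm : ∀ k, MeasurableSet {x | frobNorm3 (F k x - R x) ≤ δ} := fun k =>
      measurableSet_le (meas_frobNorm3 (meas_matsub (hFmeas k) hRmeas)) measurable_const
    have hBadmeas : ∀ k, MeasurableSet (Bad k) := fun k => (hsetm k).compl
    -- test pieces
    set w1 : ℕ → (Fin 3 → ℝ) → M3 := fun k x =>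
      if frobNorm3 (F k x - R x) ≤ δ then φ x * (cof3 (F k x) - R x) else 0 with hw1def
    set w2 : ℕ → (Fin 3 → ℝ) → M3 := fun k x =>
      if frobNorm3 (F k x - R x) ≤ δ then 0 else -(ψ x) with hw2def
    set v : ℕ → (Fin 3 → ℝ) → ℝ := fun k x =>
      if frobNorm3 (F k x - R x) ≤ δ then frobSq3 (φ x) * (F k x).det else 0 with hvdef
    have hw1meas : ∀ k, Measurable (w1 k) := fun k => Measurable.ite (hsetm k)
      (meas_matmul hφmeas (meas_matsub (meas_cof3 (hFmeas k)) hRmeas)) measurable_const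
    have hw2meas : ∀ k, Measurable (w2 k) := fun k =>
      Measurable.ite (hsetm k) measurable_const (meas_matneg hψmeas)
    have hvmeas : ∀ k, Measurable (v k) := fun k => Measurable.ite (hsetm k)
      ((meas_frobSq3 hφmeas).mul (meas_det (hFmeas k))) measurable_const
    -- a.e. facts
    have hφN : ∀ᵐ x ∂μ, frobNorm3 (φ x) = frobNorm3 (φ₀ x) := by
      filter_upwards [hSO] with x hx
      exact frobNorm3_eq_of_frobSq3_eq (so3_frobSq_mul hx.1 (φ₀ x))
    have hφSq : ∀ᵐ x ∂μ, frobSq3 (φ x) = frobSq3 (φ₀ x) := by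
      filter_upwards [hSO] with x hx
      exact so3_frobSq_mul hx.1 (φ₀ x)
    have hψN : ∀ᵐ x ∂μ, frobNorm3 (ψ x) ≤ c := by
      filter_upwards [hψae] with x hx
      rw [hx]; exact hφ₀N x
    have hest : ∀ k, ∀ᵐ x ∂μ, frobNorm3 (F k x - R x) ≤ δ →
        (frobNorm3 (cof3 (F k x) - R x) ≤ r ∧ (F k x).det ≤ 1 + r) := by
      intro k
      filter_upwards [hSO] with x hx hgood
      have hentries : ∀ i j, |F k x i j - R x i j| ≤ δ := by
        intro i j
        have h := abs_entry_le_frobNorm3 (F k x - R x) i j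
        rw [Matrix.sub_apply] at h
        exact h.trans hgood
      have hRent : ∀ i j, |R x i j| ≤ 1 := fun i j => so3_entry_abs_le hx.1 i j
      constructor
      · have h1 := cof3_pert (F k x) (R x) hentries hRent hδ1
        rw [so3_cof hx.1 hx.2] at h1
        exact h1.trans (by linarith)
      · have h2 := det3_pert (F k x) (R x) hentries hRent hδ1
        rw [hx.2] at h2
        have h3 := abs_le.mp h2
        linarith [h3.2]
    have hw1N : ∀ k, ∀ᵐ x ∂μ, frobNorm3 (w1 k x) ≤ c * r := by
      intro k
      filter_upwards [hest k, hφN] with x hx hφx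
      rw [hw1def]; dsimp only
      split_ifs with hgood
      · calc frobNorm3 (φ x * (cof3 (F k x) - R x))
            ≤ frobNorm3 (φ x) * frobNorm3 (cof3 (F k x) - R x) := frobNorm3_mul_le _ _
          _ ≤ c * r := by
              rw [hφx]
              exact mul_le_mul (hφ₀N x) (hx hgood).1 (frobNorm3_nonneg _) hc0.le
      · rw [frobNorm3_zero]; positivity
    have hw2ind : ∀ k (i j : Fin 3), ∀ᵐ x ∂μ,
        ‖w2 k x i j‖ ≤ ‖(Bad k).indicator (fun _ => c) x‖ := by
      intro k i j
      filter_upwards [hψN] with x hx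
      rw [hw2def]; dsimp only
      split_ifs with hgood
      · simp only [Matrix.zero_apply, norm_zero]
        exact norm_nonneg _
      · have hmem : x ∈ Bad k := by rw [hBaddef]; exact hgood
        rw [Set.indicator_of_mem hmem, Real.norm_eq_abs, Real.norm_eq_abs,
          abs_of_nonneg hc0.le]
        refine (abs_entry_le_frobNorm3 _ i j).trans ?_
        rw [frobNorm3_neg]
        exact hx
    have hwsum_bound : ∀ k, ∀ᵐ x ∂μ, frobNorm3 (w1 k x + w2 k x) ≤ c := by
      intro k
      filter_upwards [hw1N k, hψN] with x h1 h2
      rw [hw1def, hw2def]; dsimp only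
      split_ifs with hgood
      · rw [add_zero]
        rw [hw1def] at h1; dsimp only at h1; rw [if_pos hgood] at h1
        nlinarith [h1, hc0]
      · rw [zero_add, frobNorm3_neg]
        exact h2
    -- MemLp of test entries
    have hwsplit : ∀ k (i j : Fin 3), (fun x => (w1 k x + w2 k x) i j)
        = (fun x => w1 k x i j) + (fun x => w2 k x i j) := by
      intro k i j
      funext x
      simp [Matrix.add_apply]
    have hwLp : ∀ k (i j : Fin 3),
        MemLp (fun x => (w1 k x + w2 k x) i j) (ENNReal.ofReal q) μ := by
      intro k i j
      refine MemLp.of_bound ?_ c ?_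
      · rw [hwsplit]
        exact ((meas_entry (hw1meas k) i j).add
          (meas_entry (hw2meas k) i j)).aestronglyMeasurable
      · filter_upwards [hwsum_bound k] with x hx
        rw [Real.norm_eq_abs]
        exact (abs_entry_le_frobNorm3 _ i j).trans hx
    -- eLpNorm bound
    set D : ℕ → ℝ≥0∞ := fun k => μ Set.univ ^ q⁻¹ * ENNReal.ofReal (c * r)
      + ENNReal.ofReal c * μ (Bad k) ^ (1 / q) with hDdef
    have hAne : μ Set.univ ^ q⁻¹ * ENNReal.ofReal (c * r) ≠ ⊤ :=
      (ENNReal.mul_lt_top (ENNReal.rpow_lt_top_of_nonneg (by positivity) hμuniv.ne)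
        ENNReal.ofReal_lt_top).ne
    have hDfin : ∀ k, D k ≠ ⊤ := by
      intro k
      rw [hDdef]
      refine ENNReal.add_ne_top.mpr ⟨hAne, ?_⟩
      exact (ENNReal.mul_lt_top ENNReal.ofReal_lt_top
        (ENNReal.rpow_lt_top_of_nonneg (by positivity) (measure_lt_top μ _).ne)).ne
    have heLp : ∀ k (i j : Fin 3),
        eLpNorm (fun x => (w1 k x + w2 k x) i j) (ENNReal.ofReal q) μ ≤ D k := by
      intro k i j
      rw [hwsplit]
      refine (eLpNorm_add_le (meas_entry (hw1meas k) i j).aestronglyMeasurable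
        (meas_entry (hw2meas k) i j).aestronglyMeasurable hqe1).trans ?_
      rw [hDdef]
      refine add_le_add ?_ ?_
      · have hb : ∀ᵐ x ∂μ, ‖w1 k x i j‖ ≤ c * r := by
          filter_upwards [hw1N k] with x hx
          rw [Real.norm_eq_abs]
          exact (abs_entry_le_frobNorm3 _ i j).trans hx
        have h := eLpNorm_le_of_ae_bound (p := ENNReal.ofReal q) hb
        rwa [ENNReal.toReal_ofReal hq0.le] at h
      · refine (eLpNorm_mono_ae (hw2ind k i j)).trans ?_
        rw [eLpNorm_indicator_const (hBadmeas k) hqe0' ENNReal.ofReal_ne_top,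
          ENNReal.toReal_ofReal hq0.le, Real.enorm_eq_ofReal hc0.le]
    -- per-entry integral bound
    have hone : ∀ k (i j : Fin 3), |∫ x, G k x i j * (w1 k x + w2 k x) i j ∂μ|
        ≤ C * (D k).toReal := by
      intro k i j
      refine (hCb i j k _ (hwLp k i j)).trans ?_
      exact mul_le_mul_of_nonneg_left
        (ENNReal.toReal_mono (hDfin k) (heLp k i j)) hC0
    have hWb : ∀ k, |∑ i, ∑ j, ∫ x, G k x i j * (w1 k x + w2 k x) i j ∂μ|
        ≤ 9 * (C * (D k).toReal) := by
      intro k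
      calc |∑ i, ∑ j, ∫ x, G k x i j * (w1 k x + w2 k x) i j ∂μ|
          ≤ ∑ i, |∑ j, ∫ x, G k x i j * (w1 k x + w2 k x) i j ∂μ| :=
            Finset.abs_sum_le_sum_abs _ _
        _ ≤ ∑ _i : Fin 3, ∑ _j : Fin 3, C * (D k).toReal := by
            refine Finset.sum_le_sum fun i _ => ?_
            refine (Finset.abs_sum_le_sum_abs _ _).trans ?_
            exact Finset.sum_le_sum fun j _ => hone k i j
        _ = 9 * (C * (D k).toReal) := by
            simp [Finset.sum_const]
            ring
    -- integrability
    have hdotψint : ∀ k, Integrable (fun x => dot3 (G k x) (ψ x)) μ := by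
      intro k
      refine ((hGNint k).const_mul c).mono'
        (meas_dot3 (hGmeas k) hψmeas).aestronglyMeasurable ?_
      filter_upwards [hψN] with x hx
      rw [Real.norm_eq_abs]
      calc |dot3 (G k x) (ψ x)| ≤ frobNorm3 (G k x) * frobNorm3 (ψ x) := abs_dot3_le _ _
        _ ≤ frobNorm3 (G k x) * c :=
            mul_le_mul_of_nonneg_left hx (frobNorm3_nonneg _)
        _ = c * frobNorm3 (G k x) := mul_comm _ _
    have hdotwint : ∀ k, Integrable (fun x => dot3 (G k x) (w1 k x + w2 k x)) μ := by
      intro k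
      refine ((hGNint k).const_mul c).mono'
        (meas_dot3 (hGmeas k) (meas_matadd (hw1meas k) (hw2meas k))).aestronglyMeasurable ?_
      filter_upwards [hwsum_bound k] with x hx
      rw [Real.norm_eq_abs]
      calc |dot3 (G k x) (w1 k x + w2 k x)|
          ≤ frobNorm3 (G k x) * frobNorm3 (w1 k x + w2 k x) := abs_dot3_le _ _
        _ ≤ frobNorm3 (G k x) * c :=
            mul_le_mul_of_nonneg_left hx (frobNorm3_nonneg _)
        _ = c * frobNorm3 (G k x) := mul_comm _ _
    have hentry_int : ∀ k (i j : Fin 3),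
        Integrable (fun x => G k x i j * (w1 k x + w2 k x) i j) μ := by
      intro k i j
      have heq : (fun x => G k x i j * (w1 k x + w2 k x) i j)
          = fun x => G k x i j * (w1 k x i j + w2 k x i j) := by
        funext x; simp [Matrix.add_apply]
      refine ((hGNint k).const_mul c).mono' ?_ ?_
      · rw [heq]
        exact ((meas_entry (hGmeas k) i j).mul ((meas_entry (hw1meas k) i j).add
          (meas_entry (hw2meas k) i j))).aestronglyMeasurable
      · filter_upwards [hwsum_bound k] with x hx
        rw [Real.norm_eq_abs, abs_mul]
        calc |G k x i j| * |(w1 k x + w2 k x) i j|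
            ≤ frobNorm3 (G k x) * c :=
              mul_le_mul (abs_entry_le_frobNorm3 _ i j)
                ((abs_entry_le_frobNorm3 _ i j).trans hx) (abs_nonneg _)
                (frobNorm3_nonneg _)
          _ = c * frobNorm3 (G k x) := mul_comm _ _
    have hvint : ∀ k, Integrable (v k) μ := by
      intro k
      refine (integrable_const (c^2 * (1+r))).mono' (hvmeas k).aestronglyMeasurable ?_
      filter_upwards [hest k, hφSq, hFdet k] with x hx hsq hdet
      rw [hvdef]; dsimp only
      split_ifs with hgood
      · rw [Real.norm_eq_abs,
          abs_of_nonneg (mul_nonneg (frobSq3_nonneg _) hdet.le)]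
        rw [hsq]
        exact mul_le_mul (hφ₀Sq x) (hx hgood).2 hdet.le (by positivity)
      · rw [norm_zero]
        nlinarith [sq_nonneg c, hr0]
    -- u and its integral
    set u : ℕ → (Fin 3 → ℝ) → ℝ := fun k x =>
      2 * dot3 (G k x) (ψ x) + 2 * dot3 (G k x) (w1 k x + w2 k x) - v k x with hudef
    have huint : ∀ k, Integrable (u k) μ := fun k =>
      (((hdotψint k).const_mul 2).add ((hdotwint k).const_mul 2)).sub (hvint k)
    have hdotw_eq : ∀ k, (∫ x, dot3 (G k x) (w1 k x + w2 k x) ∂μ)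
        = ∑ i, ∑ j, ∫ x, G k x i j * (w1 k x + w2 k x) i j ∂μ := by
      intro k
      calc (∫ x, dot3 (G k x) (w1 k x + w2 k x) ∂μ)
          = ∫ x, ∑ i, ∑ j, G k x i j * (w1 k x + w2 k x) i j ∂μ := rfl
        _ = ∑ i, ∫ x, ∑ j, G k x i j * (w1 k x + w2 k x) i j ∂μ :=
            integral_finset_sum _ (fun i _ =>
              integrable_finset_sum _ fun j _ => hentry_int k i j)
        _ = ∑ i, ∑ j, ∫ x, G k x i j * (w1 k x + w2 k x) i j ∂μ :=
            Finset.sum_congr rfl fun i _ =>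
              integral_finset_sum _ fun j _ => hentry_int k i j
    have hu_eq : ∀ k, (∫ x, u k x ∂μ) = 2 * (∫ x, dot3 (G k x) (ψ x) ∂μ)
        + 2 * (∑ i, ∑ j, ∫ x, G k x i j * (w1 k x + w2 k x) i j ∂μ)
        - ∫ x, v k x ∂μ := by
      intro k
      rw [← hdotw_eq k]
      simp only [hudef]
      have hint1 : Integrable (fun x => 2 * dot3 (G k x) (ψ x)
          + 2 * dot3 (G k x) (w1 k x + w2 k x)) μ :=
        ((hdotψint k).const_mul 2).add ((hdotwint k).const_mul 2)
      have hint2 : Integrable (fun x => 2 * dot3 (G k x) (ψ x)) μ :=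
        (hdotψint k).const_mul 2
      have hint3 : Integrable (fun x => 2 * dot3 (G k x) (w1 k x + w2 k x)) μ :=
        (hdotwint k).const_mul 2
      rw [integral_sub hint1 (hvint k), integral_add hint2 hint3,
        integral_const_mul, integral_const_mul]
    -- v integral bound
    have hSqint : Integrable (fun x => frobSq3 (φ₀ x)) μ := by
      refine (integrable_const (c^2)).mono' (meas_frobSq3 hφ₀meas).aestronglyMeasurable
        (ae_of_all _ fun x => ?_)
      rw [Real.norm_eq_abs, abs_of_nonneg (frobSq3_nonneg _)]
      exact hφ₀Sq x
    have hv_le : ∀ k, (∫ x, v k x ∂μ) ≤ (1+r) * Sφ := by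
      intro k
      have h := integral_mono_ae (hvint k) (hSqint.const_mul (1+r)) ?_
      · rwa [integral_const_mul] at h
      · filter_upwards [hest k, hφSq, hFdet k] with x hx hsq hdet
        rw [hvdef]; dsimp only
        split_ifs with hgood
        · rw [hsq]
          calc frobSq3 (φ₀ x) * (F k x).det ≤ frobSq3 (φ₀ x) * (1+r) :=
                mul_le_mul_of_nonneg_left (hx hgood).2 (frobSq3_nonneg _)
            _ = (1+r) * frobSq3 (φ₀ x) := mul_comm _ _
        · exact mul_nonneg (by linarith) (frobSq3_nonneg _)
    -- key pointwise inequality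
    have hkey : ∀ k, ∀ᵐ x ∂μ, ENNReal.ofReal (u k x)
        ≤ ENNReal.ofReal (frobSq3 (G k x * (F k x)⁻¹) * (F k x).det) := by
      intro k
      filter_upwards [hFdet k] with x hdet
      rw [hudef]; dsimp only
      by_cases hgood : frobNorm3 (F k x - R x) ≤ δ
      · rw [hw1def, hw2def, hvdef]; dsimp only
        rw [if_pos hgood, if_pos hgood, if_pos hgood]
        have hsum2 : ψ x + (φ x * (cof3 (F k x) - R x) + 0) = φ x * cof3 (F k x) := by
          rw [add_zero, hψdef]; dsimp only
          rw [Matrix.mul_sub]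
          abel
        have e1 : dot3 (G k x) (ψ x) + dot3 (G k x) (φ x * (cof3 (F k x) - R x) + 0)
            = dot3 (G k x) (φ x * cof3 (F k x)) := by
          rw [← dot3_add_right, hsum2]
        refine ENNReal.ofReal_le_ofReal ?_
        have hkp := key_pointwise (G k x) (F k x) (φ x) hdet
        linarith [e1, hkp]
      · rw [hw1def, hw2def, hvdef]; dsimp only
        rw [if_neg hgood, if_neg hgood, if_neg hgood]
        have e0 : (2 * dot3 (G k x) (ψ x) + 2 * dot3 (G k x) (0 + -(ψ x)) - 0) = 0 := by
          rw [zero_add, dot3_neg_right]; ring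
        rw [e0, ENNReal.ofReal_zero]
        exact zero_le
    -- chain
    have hchain : ∀ k, ENNReal.ofReal (∫ x, u k x ∂μ)
        ≤ ∫⁻ x, ENNReal.ofReal (frobSq3 (G k x * (F k x)⁻¹) * (F k x).det) ∂μ := fun k =>
      (ofReal_int_le (huint k)).trans (lintegral_mono_ae (hkey k))
    -- lower bound sequence
    set b : ℕ → ℝ := fun k => 2 * (∫ x, dot3 (G k x) (ψ x) ∂μ)
      - 18 * (C * (D k).toReal) - (1+r) * Sφ with hbdef
    have hb_le : ∀ k, b k ≤ ∫ x, u k x ∂μ := by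
      intro k
      rw [hu_eq k, hbdef]
      have h1 := (abs_le.mp (hWb k)).1
      have h2 := hv_le k
      dsimp only
      linarith
    -- convergence of bad-set measures
    have hBad0 : Tendsto (fun k => μ (Bad k)) atTop (𝓝 0) := by
      rw [ENNReal.tendsto_nhds_zero]
      intro ε hε
      have hδ2 : ENNReal.ofReal (δ^2) ≠ 0 := by
        simp only [ne_eq, ENNReal.ofReal_eq_zero, not_le]; positivity
      have hεδ : 0 < ε * ENNReal.ofReal (δ^2) :=
        ENNReal.mul_pos hε.ne' hδ2
      filter_upwards [(ENNReal.tendsto_nhds_zero.mp hFconv) (ε * ENNReal.ofReal (δ^2))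
        hεδ] with k hk
      have hsub : Bad k ⊆ {x | ENNReal.ofReal (δ^2)
          ≤ ENNReal.ofReal (frobSq3 (F k x - R x))} := by
        intro x hx
        have hlt : δ < frobNorm3 (F k x - R x) := by
          rw [hBaddef] at hx
          exact lt_of_not_ge hx
        refine ENNReal.ofReal_le_ofReal ?_
        rw [← frobNorm3_sq]
        exact pow_le_pow_left₀ hδ0.le hlt.le 2
      have hmark := mul_meas_ge_le_lintegral₀
        (((meas_frobSq3 (meas_matsub (hFmeas k) hRmeas)).ennreal_ofReal).aemeasurable)
        (μ := μ) (ENNReal.ofReal (δ^2))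
      have h1 : μ (Bad k) ≤ (∫⁻ x, ENNReal.ofReal (frobSq3 (F k x - R x)) ∂μ)
          / ENNReal.ofReal (δ^2) := by
        rw [ENNReal.le_div_iff_mul_le (Or.inl hδ2) (Or.inl ENNReal.ofReal_ne_top)]
        calc μ (Bad k) * ENNReal.ofReal (δ^2)
            = ENNReal.ofReal (δ^2) * μ (Bad k) := mul_comm _ _
          _ ≤ ENNReal.ofReal (δ^2) * μ {x | ENNReal.ofReal (δ^2)
              ≤ ENNReal.ofReal (frobSq3 (F k x - R x))} :=
              mul_le_mul_right (measure_mono hsub) _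
          _ ≤ _ := hmark
      refine h1.trans ?_
      refine (ENNReal.div_le_div_right hk _).trans ?_
      rw [ENNReal.div_le_iff_le_mul (Or.inl hδ2) (Or.inl ENNReal.ofReal_ne_top)]
    -- convergence of D
    have hDto : Tendsto (fun k => (D k).toReal) atTop
        (𝓝 ((μ Set.univ ^ q⁻¹ * ENNReal.ofReal (c * r)).toReal)) := by
      have h2 : Tendsto (fun k => μ (Bad k) ^ (1/q)) atTop (𝓝 0) := by
        have hcont := (ENNReal.continuous_rpow_const (y := 1/q)).tendsto 0
        have h := hcont.comp hBad0
        rwa [ENNReal.zero_rpow_of_pos (by positivity)] at h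
      have h3 : Tendsto (fun k => ENNReal.ofReal c * μ (Bad k) ^ (1/q)) atTop (𝓝 0) := by
        have h := ENNReal.Tendsto.const_mul (a := ENNReal.ofReal c) h2
          (Or.inr ENNReal.ofReal_ne_top)
        rwa [mul_zero] at h
      have h4 : Tendsto D atTop (𝓝 (μ Set.univ ^ q⁻¹ * ENNReal.ofReal (c * r))) := by
        have h := (tendsto_const_nhds
          (x := μ Set.univ ^ q⁻¹ * ENNReal.ofReal (c * r)) (f := atTop (α := ℕ))).add h3
        rw [add_zero] at h
        exact h
      exact (ENNReal.tendsto_toReal hAne).comp h4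
    have hbto : Tendsto b atTop (𝓝 (2 * P
        - 18 * (C * (μ Set.univ ^ q⁻¹ * ENNReal.ofReal (c * r)).toReal) - (1+r) * Sφ)) :=
      ((hP.const_mul 2).sub ((hDto.const_mul C).const_mul 18)).sub_const _
    -- pass to liminf
    have hlim : Filter.liminf (fun k => ENNReal.ofReal (b k)) atTop
        = ENNReal.ofReal (2 * P
          - 18 * (C * (μ Set.univ ^ q⁻¹ * ENNReal.ofReal (c * r)).toReal)
          - (1+r) * Sφ) :=
      ((ENNReal.continuous_ofReal.tendsto _).comp hbto).liminf_eq
    have hstep : ENNReal.ofReal (2 * P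
        - 18 * (C * (μ Set.univ ^ q⁻¹ * ENNReal.ofReal (c * r)).toReal) - (1+r) * Sφ)
        ≤ Filter.liminf (fun k => ∫⁻ x,
          ENNReal.ofReal (frobSq3 (G k x * (F k x)⁻¹) * (F k x).det) ∂μ) atTop := by
      rw [← hlim]
      refine Filter.liminf_le_liminf (Eventually.of_forall fun k => ?_)
      exact (ENNReal.ofReal_le_ofReal (hb_le k)).trans (hchain k)
    refine le_trans (ENNReal.ofReal_le_ofReal ?_) hstep
    have he1 : (μ Set.univ ^ q⁻¹ * ENNReal.ofReal (c * r)).toReal = Mq * (c * r) := by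
      rw [ENNReal.toReal_mul, ENNReal.toReal_ofReal (by positivity), hMqdef]
    rw [hT0def, hKdef, he1]
    apply le_of_eq
    ring
  -- let r → 0
  -- let r → 0
  have hT0 : ENNReal.ofReal T0
      ≤ Filter.liminf (fun k => ∫⁻ x,
        ENNReal.ofReal (frobSq3 (G k x * (F k x)⁻¹) * (F k x).det) ∂μ) atTop := by
    have hseq : Tendsto (fun m : ℕ => T0 - (1/((m:ℝ)+1)) * K) atTop (𝓝 T0) := by
      have h0 : Tendsto (fun m : ℕ => 1/((m:ℝ)+1)) atTop (𝓝 0) :=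
        tendsto_one_div_add_atTop_nhds_zero_nat
      have h1 := h0.mul_const K
      rw [zero_mul] at h1
      have h2 := (tendsto_const_nhds (x := T0) (f := atTop (α := ℕ))).sub h1
      rw [sub_zero] at h2
      exact h2
    have hofReal : Tendsto (fun m : ℕ => ENNReal.ofReal (T0 - (1/((m:ℝ)+1)) * K)) atTop
        (𝓝 (ENNReal.ofReal T0)) := (ENNReal.continuous_ofReal.tendsto _).comp hseq
    refine le_of_tendsto hofReal (Eventually.of_forall fun m => ?_)
    refine claim _ (by positivity) ?_
    rw [div_le_one (by positivity)]
    linarith [Nat.cast_nonneg (α := ℝ) m]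
  -- conclude
  have hmin_meas : Measurable fun x => min (frobNorm3 (Gl x)) c ^ 2 :=
    ((meas_frobNorm3 hGlmeas).min measurable_const).pow_const 2
  have hint_min : Integrable (fun x => min (frobNorm3 (Gl x)) c ^ 2) μ := by
    refine (integrable_const (c^2)).mono' hmin_meas.aestronglyMeasurable
      (ae_of_all _ fun x => ?_)
    rw [Real.norm_eq_abs, abs_of_nonneg (by positivity)]
    exact pow_le_pow_left₀ (le_min (frobNorm3_nonneg _) hc0.le) (min_le_right _ _) 2
  have hint_dot : Integrable (fun x => dot3 (Gl x) (ψ x)) μ := by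
    refine (hGlNint.const_mul c).mono'
      (meas_dot3 hGlmeas hψmeas).aestronglyMeasurable ?_
    filter_upwards [hψae] with x hx
    rw [Real.norm_eq_abs, hx]
    calc |dot3 (Gl x) (φ₀ x)| ≤ frobNorm3 (Gl x) * frobNorm3 (φ₀ x) := abs_dot3_le _ _
      _ ≤ frobNorm3 (Gl x) * c :=
          mul_le_mul_of_nonneg_left (hφ₀N x) (frobNorm3_nonneg _)
      _ = c * frobNorm3 (Gl x) := mul_comm _ _
  have hintSq : Integrable (fun x => frobSq3 (φ₀ x)) μ := by
    refine (integrable_const (c^2)).mono' (meas_frobSq3 hφ₀meas).aestronglyMeasurable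
      (ae_of_all _ fun x => ?_)
    rw [Real.norm_eq_abs, abs_of_nonneg (frobSq3_nonneg _)]
    exact hφ₀Sq x
  have hT0eq : T0 = ∫ x, (2 * dot3 (Gl x) (ψ x) - frobSq3 (φ₀ x)) ∂μ := by
    rw [hT0def, hPdef, hSφdef, integral_sub (hint_dot.const_mul 2) hintSq,
      integral_const_mul]
  have hge : (∫ x, min (frobNorm3 (Gl x)) c ^ 2 ∂μ) ≤ T0 := by
    rw [hT0eq]
    refine integral_mono_ae hint_min ((hint_dot.const_mul 2).sub hintSq) ?_
    filter_upwards [hψae] with x hx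
    rw [hx]
    exact hdot₀ x
  calc (∫⁻ x, ENNReal.ofReal (min (frobNorm3 (Gl x)) c ^ 2) ∂μ)
      = ENNReal.ofReal (∫ x, min (frobNorm3 (Gl x)) c ^ 2 ∂μ) :=
        (ofReal_integral_eq_lintegral_ofReal hint_min
          (ae_of_all _ fun x => by positivity)).symm
    _ ≤ ENNReal.ofReal T0 := ENNReal.ofReal_le_ofReal hge
    _ ≤ _ := hT0
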